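/- Let Λ = (λ₁, ..., λₙ) be a vector of nonzero complex numbers. Suppose there exist n linearly independent multi-indices I = (i₁, ..., iₙ) in N^n \ {0} such that λ₁^{i₁} ⋯ λₙ^{iₙ} = 1 for each of them. Then every λⱼ is a root of unity. -/

import Mathlib

lemma zpow_finset_sum {G : Type*} [CommGroup G] {ι : Type*} (x : G) (s : Finset ι)
    (f : ι → ℤ) : x ^ (∑ i ∈ s, f i) = ∏ i ∈ s, x ^ f i := by
  classical
  induction s using Finset.induction with
  | empty => simp
  | @insert a s h ih => simp [Finset.sum_insert h, Finset.prod_insert h, zpow_add, ih]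

/-- If `Λ = (λ₁, …, λₙ)` is a vector of nonzero complex numbers admitting `n`
linearly independent (over `ℚ`) multi-indices `I ∈ ℕⁿ \ {0}` with
`λ₁^{i₁} ⋯ λₙ^{iₙ} = 1`, then every `λⱼ` is a root of unity. -/
theorem stmt_2 {n : ℕ} (lam : Fin n → ℂ) (hlam : ∀ j, lam j ≠ 0)
    (I : Fin n → Fin n → ℕ)
    (hind : LinearIndependent ℚ (fun k => (fun j => (I k j : ℚ)) : Fin n → Fin n → ℚ))
    (hres : ∀ k, ∏ j, lam j ^ I k j = 1) :
    ∀ j, ∃ m : ℕ, 0 < m ∧ lam j ^ m = 1 := by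
  intro j
  set A : Matrix (Fin n) (Fin n) ℤ := Matrix.of fun k t => (I k t : ℤ) with hA
  -- determinant is nonzero
  have hdet : A.det ≠ 0 := by
    have hM : IsUnit (A.map (Int.cast : ℤ → ℚ)) := by
      rw [← Matrix.linearIndependent_rows_iff_isUnit]
      have he : (fun i => (A.map (Int.cast : ℤ → ℚ)) i)
          = (fun k => (fun j => (I k j : ℚ))) := by
        funext k t
        simp [A, Matrix.map_apply]
      rw [show (A.map (Int.cast : ℤ → ℚ)).row = _ from he]
      exact hind
    have hdq : ((A.det : ℚ)) ≠ 0 := by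
      have h1 := ((Matrix.isUnit_iff_isUnit_det _).mp hM).ne_zero
      rwa [show A.map (Int.cast : ℤ → ℚ) = (Int.castRingHom ℚ).mapMatrix A from rfl,
        ← RingHom.map_det] at h1
    exact_mod_cast fun h => hdq (by rw [h]; simp)
  -- work in the group of units
  set u : Fin n → ℂˣ := fun t => Units.mk0 (lam t) (hlam t) with hu
  have hres' : ∀ k, ∏ t, u t ^ (I k t) = 1 := by
    intro k
    ext
    push_cast
    exact hres k
  have key : ∀ t, ∑ k, A.adjugate j k * A k t = if j = t then A.det else 0 := by
    intro t
    have h2 := congrFun (congrFun (Matrix.adjugate_mul A) j) t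
    simpa [Matrix.mul_apply, Matrix.one_apply] using h2
  have main : u j ^ A.det = 1 := by
    have : ∏ t, u t ^ (∑ k, A.adjugate j k * A k t) = u j ^ A.det := by
      have : ∀ t ∈ Finset.univ, u t ^ (∑ k, A.adjugate j k * A k t)
          = if j = t then u t ^ A.det else 1 := by
        intro t _
        rw [key t]
        split <;> simp
      rw [Finset.prod_congr rfl this, Finset.prod_ite_eq]
      simp
    rw [← this]
    have : ∀ t ∈ Finset.univ, u t ^ (∑ k, A.adjugate j k * A k t)
        = ∏ k, (u t ^ (A k t)) ^ A.adjugate j k := by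
      intro t _
      rw [zpow_finset_sum]
      exact Finset.prod_congr rfl fun k _ => by rw [mul_comm, zpow_mul]
    rw [Finset.prod_congr rfl this, Finset.prod_comm]
    have : ∀ k ∈ Finset.univ, (∏ t, (u t ^ (A k t)) ^ A.adjugate j k) = 1 := by
      intro k _
      rw [Finset.prod_zpow]
      have : (∏ t, u t ^ (A k t)) = 1 := by
        have := hres' k
        simpa [hA, zpow_natCast] using this
      rw [this, one_zpow]
    rw [Finset.prod_congr rfl this]
    simp
  refine ⟨A.det.natAbs, Int.natAbs_pos.mpr hdet, ?_⟩
  have hup : u j ^ (A.det.natAbs) = 1 := by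
    rcases Int.natAbs_eq A.det with h | h
    · rw [← zpow_natCast, ← h, main]
    · rw [← zpow_natCast]
      have : u j ^ (-(A.det.natAbs : ℤ)) = 1 := by rw [← h, main]
      rw [zpow_neg] at this
      exact inv_eq_one.mp this
  have := congrArg (Units.val) hup
  simpa [hu] using this
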